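/- arXiv:1601.08056 — 3 statements merged into one kernel-verified Lean document; each statement's English description precedes it below -/
import Mathlib

section
/- Let ξ : [0,∞) → ℝ be a measurable path with u ↦ e^{αξ_u} locally integrable, α > 0, and let τ_t = inf{ s : ∫₀^s e^{αξ_u} du > t } be the right-continuous inverse of the continuous strictly increasing function s ↦ ∫₀^s e^{αξ_u} du. Then for every s ≥ 0 with τ_s < ∞, ∫₀^s e^{−2αξ_{τ_u}} du = ∫₀^{τ_s} e^{−αξ_u} du. -/
open MeasureTheory intervalIntegral
open Set

/-- Change of variables for the Lamperti time change: with
`τ_t = inf{s ≥ 0 : ∫₀^s e^{αξ_u} du > t}`, for every `s ≥ 0` with `τ_s < ∞` one has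
`∫₀^s e^{-2αξ_{τ_u}} du = ∫₀^{τ_s} e^{-αξ_u} du`. -/
theorem lamperti_inversion_change_of_variables (ξ : ℝ → ℝ) (hmeas : Measurable ξ) (α : ℝ)
    (hα : 0 < α)
    (hint : ∀ s : ℝ, 0 ≤ s → IntervalIntegrable (fun u => Real.exp (α * ξ u)) volume 0 s)
    (τ : ℝ → ℝ)
    (hτ : ∀ t : ℝ, τ t = sInf {s : ℝ | 0 ≤ s ∧ t < ∫ u in (0:ℝ)..s, Real.exp (α * ξ u)})
    (s : ℝ) (hs : 0 ≤ s)
    (hfin : {s' : ℝ | 0 ≤ s' ∧ s < ∫ u in (0:ℝ)..s', Real.exp (α * ξ u)}.Nonempty) :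
    ∫ u in (0:ℝ)..s, Real.exp (-(2 * α) * ξ (τ u)) =
      ∫ u in (0:ℝ)..(τ s), Real.exp (-α * ξ u) := by
  set E : ℝ → ℝ := fun u => Real.exp (α * ξ u) with hE
  set E' : ℝ → ℝ := fun u => if 0 ≤ u then E u else 0 with hE'
  have hE'meas : Measurable E' := by
    apply Measurable.ite measurableSet_Ici
    · exact (Real.measurable_exp.comp (hmeas.const_mul α))
    · exact measurable_const
  have hE'nonneg : ∀ u, 0 ≤ E' u := by
    intro u
    by_cases h : 0 ≤ u <;> simp [hE', hE, h, (Real.exp_pos _).le]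
  -- interval integrability of E' on all intervals
  have hE'int0 : ∀ b : ℝ, IntervalIntegrable E' volume 0 b := by
    intro b
    rcases le_or_gt 0 b with hb | hb
    · apply (hint b hb).congr_ae
      filter_upwards [ae_restrict_mem measurableSet_uIoc] with x hx
      rw [uIoc_of_le hb] at hx
      simp [hE', hx.1.le]
    · apply IntervalIntegrable.symm
      apply (intervalIntegrable_const (c := (0:ℝ))).congr_ae
      have h0 : ∀ᵐ x : ℝ ∂volume, x ≠ 0 := by
        rw [ae_iff]
        convert measure_singleton (μ := (volume : Measure ℝ)) (0:ℝ)
        ext x; simp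
      filter_upwards [ae_restrict_mem measurableSet_uIoc, ae_restrict_of_ae h0] with x hx hx0
      rw [uIoc_of_le hb.le] at hx
      have : x < 0 := lt_of_le_of_ne hx.2 hx0
      simp [hE', not_le.2 this]
  have hE'int : ∀ a b : ℝ, IntervalIntegrable E' volume a b :=
    fun a b => (hE'int0 a).symm.trans (hE'int0 b)
  set A : ℝ → ℝ := fun y => ∫ u in (0:ℝ)..y, E' u with hA
  have hAsub : ∀ a b : ℝ, A b - A a = ∫ u in a..b, E' u := by
    intro a b
    rw [hA]
    simpa using integral_interval_sub_left (hE'int 0 b) (hE'int 0 a)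
  have hAmono : Monotone A := by
    intro a b hab
    have h1 : 0 ≤ ∫ u in a..b, E' u :=
      intervalIntegral.integral_nonneg hab (fun u _ => hE'nonneg u)
    linarith [hAsub a b]
  have hAcont : Continuous A := intervalIntegral.continuous_primitive hE'int 0
  have hApos : ∀ a b : ℝ, 0 ≤ a → a < b → A a < A b := by
    intro a b ha hab
    have h1 : 0 < ∫ u in a..b, E' u := by
      apply intervalIntegral_pos_of_pos_on (hE'int a b) _ hab
      intro x hx
      have : 0 ≤ x := ha.trans hx.1.le
      simp only [hE', hE, if_pos this]
      exact Real.exp_pos _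
    linarith [hAsub a b]
  have hAeq : ∀ y : ℝ, 0 ≤ y → A y = ∫ u in (0:ℝ)..y, E u := by
    intro y hy
    apply intervalIntegral.integral_congr
    intro x hx
    rw [uIcc_of_le hy] at hx
    simp [hE', hx.1]
  have hA0 : A 0 = 0 := by simp [hA]
  -- the defining set rewritten with A
  have hSet : ∀ t : ℝ, {s' : ℝ | 0 ≤ s' ∧ t < ∫ u in (0:ℝ)..s', E u}
      = {s' : ℝ | 0 ≤ s' ∧ t < A s'} := by
    intro t
    ext x
    simp only [mem_setOf_eq, and_congr_right_iff]
    intro hx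
    rw [hAeq x hx]
  set T : ℝ := τ s with hT
  have hτs : T = sInf {s' : ℝ | 0 ≤ s' ∧ s < A s'} := by rw [hT, hτ s, hSet]
  have hfin' : {s' : ℝ | 0 ≤ s' ∧ s < A s'}.Nonempty := by rw [← hSet]; exact hfin
  have hbdd : BddBelow {s' : ℝ | 0 ≤ s' ∧ s < A s'} := ⟨0, fun x hx => hx.1⟩
  have hT0 : 0 ≤ T := by
    rw [hτs]
    exact le_csInf hfin' (fun x hx => hx.1)
  have hATs : A T = s := by
    have h1 : s ≤ A T := by
      have hcl : T ∈ closure {s' : ℝ | 0 ≤ s' ∧ s < A s'} := by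
        rw [hτs]; exact csInf_mem_closure hfin' hbdd
      have hsub : closure {s' : ℝ | 0 ≤ s' ∧ s < A s'} ⊆ {x | s ≤ A x} := by
        apply closure_minimal
        · intro x hx; exact hx.2.le
        · exact isClosed_le continuous_const hAcont
      exact hsub hcl
    have h2 : A T ≤ s := by
      by_contra h
      push_neg at h
      rcases eq_or_lt_of_le hT0 with hT0' | hT0'
      · rw [← hT0', hA0] at h; exact absurd h (not_lt.2 hs)
      · have hev : {y | s < A y} ∈ nhds T := (isOpen_lt continuous_const hAcont).mem_nhds h
        rcases Metric.mem_nhds_iff.1 hev with ⟨ε, hε, hball⟩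
        set x := max 0 (T - ε / 2) with hx
        have hx0 : 0 ≤ x := le_max_left _ _
        have hxT : x < T := by
          rw [hx]
          apply max_lt hT0' (by linarith)
        have hxball : x ∈ Metric.ball T ε := by
          rw [Metric.mem_ball, Real.dist_eq, abs_sub_lt_iff]
          constructor
          · linarith
          · have : T - ε / 2 ≤ x := le_max_right _ _
            linarith
        have hxmem : x ∈ {s' : ℝ | 0 ≤ s' ∧ s < A s'} := ⟨hx0, hball hxball⟩
        have : T ≤ x := by rw [hτs]; exact csInf_le hbdd hxmem
        exact absurd hxT (not_lt.2 this)
    linarith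
  -- τ (A x) = x for x in [0, T]
  have hτA : ∀ x : ℝ, 0 ≤ x → τ (A x) = x := by
    intro x hx
    rw [hτ (A x), hSet (A x)]
    have : {s' : ℝ | 0 ≤ s' ∧ A x < A s'} = Ioi x := by
      ext y
      simp only [mem_setOf_eq, mem_Ioi]
      constructor
      · rintro ⟨hy0, hy⟩
        by_contra h
        push_neg at h
        exact absurd (hAmono h) (not_le.2 hy)
      · intro h
        exact ⟨hx.trans h.le, hApos x y hx h⟩
    rw [this, csInf_Ioi]
  -- a.e. differentiability of A with derivative E'
  have hSmeasure : hAmono.stieltjesFunction.measure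
      = volume.withDensity (fun u => ENNReal.ofReal (E' u)) := by
    have hSF : ∀ x, hAmono.stieltjesFunction x = A x := by
      intro x
      rw [Monotone.stieltjesFunction_eq]
      exact rightLim_eq_of_tendsto (h := nhdsGT_neBot x)
        ((hAcont.tendsto x).mono_left nhdsWithin_le_nhds)
    apply Measure.ext_of_Ioc
    intro a b hab
    rw [StieltjesFunction.measure_Ioc, hSF, hSF, hAsub a b,
      intervalIntegral.integral_of_le hab.le,
      withDensity_apply _ measurableSet_Ioc]
    exact ofReal_integral_eq_lintegral_ofReal (hE'int a b).1
      (Filter.Eventually.of_forall hE'nonneg)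
  have hder : ∀ᵐ x : ℝ, HasDerivAt A (E' x) x := by
    filter_upwards [hAmono.ae_hasDerivAt,
      Measure.rnDeriv_withDensity volume (hE'meas.ennreal_ofReal)] with x hx hx2
    rw [hSmeasure, hx2, ENNReal.toReal_ofReal (hE'nonneg x)] at hx
    exact hx
  -- the good set
  set s₀ : Set ℝ := Icc 0 T ∩ ({x | DifferentiableAt ℝ A x} ∩ {x | deriv A x = E x}) with hs₀
  have hs₀meas : MeasurableSet s₀ := by
    apply measurableSet_Icc.inter
    apply (measurableSet_of_differentiableAt ℝ A).inter
    exact measurableSet_eq_fun (measurable_deriv A) (Real.measurable_exp.comp (hmeas.const_mul α))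
  have hs₀deriv : ∀ x ∈ s₀, HasDerivAt A (E x) x := by
    rintro x ⟨hx1, hx2, hx3⟩
    have := hx2.hasDerivAt
    rwa [hx3] at this
  have hs₀sub : s₀ ⊆ Icc 0 T := inter_subset_left
  have hs₀ae : s₀ =ᵐ[volume] Icc 0 T := by
    rw [Filter.eventuallyEq_set]
    filter_upwards [hder] with x hx
    constructor
    · intro h; exact hs₀sub h
    · intro h
      have hxE : E' x = E x := by simp [hE', h.1]
      rw [hxE] at hx
      exact ⟨h, hx.differentiableAt, hx.deriv⟩
  have hs₀derivW : ∀ x ∈ s₀, HasDerivWithinAt A (E x) s₀ x :=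
    fun x hx => (hs₀deriv x hx).hasDerivWithinAt
  have hinj : InjOn A s₀ := by
    intro x hx y hy hxy
    by_contra h
    rcases lt_or_gt_of_ne h with h' | h'
    · exact absurd hxy (ne_of_lt (hApos x y (hs₀sub hx).1 h'))
    · exact absurd hxy.symm (ne_of_lt (hApos y x (hs₀sub hy).1 h'))
  -- image of s₀ has full measure in [0, s]
  have himg_sub : A '' s₀ ⊆ Icc 0 s := by
    rintro _ ⟨x, hx, rfl⟩
    have hx' := hs₀sub hx
    constructor
    · rw [← hA0]; exact hAmono hx'.1
    · rw [← hATs]; exact hAmono hx'.2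
  have himg_meas : MeasurableSet (A '' s₀) :=
    hs₀meas.image_of_continuousOn_injOn hAcont.continuousOn hinj
  have key1 : ∫ x in A '' s₀, (1 : ℝ) = ∫ x in s₀, |E x| • (1 : ℝ) :=
    integral_image_eq_integral_abs_deriv_smul hs₀meas hs₀derivW hinj _
  have hEabs : ∀ x : ℝ, |E x| = E x := fun x => abs_of_pos (Real.exp_pos _)
  have hmeasimg : volume (A '' s₀) = ENNReal.ofReal s := by
    have h1 : (volume (A '' s₀)).toReal = s := by
      have hL : ∫ x in A '' s₀, (1 : ℝ) = (volume (A '' s₀)).toReal := by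
        rw [setIntegral_const, smul_eq_mul, mul_one, measureReal_def]
      have hR : ∫ x in s₀, |E x| • (1 : ℝ) = s := by
        have : ∀ x : ℝ, |E x| • (1 : ℝ) = E x := by
          intro x; rw [smul_eq_mul, mul_one, hEabs]
        simp_rw [this]
        rw [setIntegral_congr_set hs₀ae, integral_Icc_eq_integral_Ioc,
          ← intervalIntegral.integral_of_le hT0, ← hAeq T hT0, hATs]
      rw [hL, hR] at key1
      exact key1
    have h2 : volume (A '' s₀) ≠ ⊤ := by
      apply ne_of_lt
      apply lt_of_le_of_lt (measure_mono himg_sub)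
      rw [Real.volume_Icc]
      exact ENNReal.ofReal_lt_top
    rw [← h1, ENNReal.ofReal_toReal h2]
  have himg_ae : A '' s₀ =ᵐ[volume] Icc 0 s := by
    refine ae_eq_of_subset_of_measure_ge himg_sub (le_of_eq ?_) himg_meas.nullMeasurableSet ?_
    · rw [hmeasimg, Real.volume_Icc, sub_zero]
    · rw [Real.volume_Icc]; exact ENNReal.ofReal_lt_top.ne
  -- main computation
  have key2 : ∫ x in A '' s₀, Real.exp (-(2 * α) * ξ (τ x))
      = ∫ x in s₀, |E x| • Real.exp (-(2 * α) * ξ (τ (A x))) :=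
    integral_image_eq_integral_abs_deriv_smul hs₀meas hs₀derivW hinj _
  calc ∫ u in (0:ℝ)..s, Real.exp (-(2 * α) * ξ (τ u))
      = ∫ x in Icc 0 s, Real.exp (-(2 * α) * ξ (τ x)) := by
        rw [intervalIntegral.integral_of_le hs, integral_Icc_eq_integral_Ioc]
    _ = ∫ x in A '' s₀, Real.exp (-(2 * α) * ξ (τ x)) := (setIntegral_congr_set himg_ae).symm
    _ = ∫ x in s₀, |E x| • Real.exp (-(2 * α) * ξ (τ (A x))) := key2
    _ = ∫ x in s₀, Real.exp (-α * ξ x) := by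
        apply setIntegral_congr_fun hs₀meas
        intro x hx
        show |E x| • Real.exp (-(2 * α) * ξ (τ (A x))) = Real.exp (-α * ξ x)
        rw [hτA x (hs₀sub hx).1, smul_eq_mul, hEabs, hE, ← Real.exp_add]
        ring_nf
    _ = ∫ x in Icc 0 T, Real.exp (-α * ξ x) := setIntegral_congr_set hs₀ae
    _ = ∫ u in (0:ℝ)..T, Real.exp (-α * ξ u) := by
        rw [intervalIntegral.integral_of_le hT0, integral_Icc_eq_integral_Ioc]
end

section
/- Let (Ω, μ) and ℝ with Lebesgue measure dz be given, let π be a σ-finite measure on a measurable space S, and let K_t(y, d(y₁,u)) be a kernel from S to S×ℝ. Define operators P_t f(y,z) = ∫ f(y₁, z+u) K_t(y, d(y₁,u)) and P̂_t f(y,z) = ∫ f(y₁, z−u) K_t(y, d(y₁,u)) acting on nonnegative measurable functions on S×ℝ. Then ∫_{S×ℝ} f(y,z) P_t g(y,z) π(dy)dz = ∫_{S×ℝ} g(y,z) P̂_t f(y,z) π(dy)dz for all nonnegative measurable f, g if and only if the measure K_t(y, dy₁ × dz) π(dy) on S×ℝ×S is symmetric under exchanging y and y₁, i.e. equals K_t(y₁,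 dy × dz) π(dy₁). -/
open MeasureTheory ProbabilityTheory Set

namespace MapDualityAux

/-- The shear equivalence `(u, z) ↦ (z, z + u)` on `ℝ × ℝ`. -/
noncomputable def shearT : ℝ × ℝ ≃ᵐ ℝ × ℝ where
  toEquiv :=
    { toFun := fun p => (p.2, p.2 + p.1)
      invFun := fun q => (q.2 - q.1, q.1)
      left_inv := fun p => by simp
      right_inv := fun q => by simp }
  measurable_toFun := measurable_snd.prodMk (measurable_snd.add measurable_fst)
  measurable_invFun := (measurable_snd.sub measurable_fst).prodMk measurable_fst

@[simp] lemma shearT_apply (p : ℝ × ℝ) : shearT p = (p.2, p.2 + p.1) := rfl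

variable {S : Type*} [MeasurableSpace S]

lemma bindker_coe (K : Kernel S (S × ℝ)) [IsFiniteKernel K] (y : S) {s : Set (S × S × ℝ)}
    (hs : MeasurableSet s) :
    (K y).map (fun p : S × ℝ => (y, p.1, p.2)) s = K y (Prod.mk y ⁻¹' s) :=
  Measure.map_apply measurable_prodMk_left hs

lemma measurable_bindker (K : Kernel S (S × ℝ)) [IsFiniteKernel K] :
    Measurable fun y => (K y).map (fun p : S × ℝ => (y, p.1, p.2)) := by
  apply Measure.measurable_of_measurable_coe
  intro s hs
  simp_rw [fun y => bindker_coe K y hs]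
  exact Kernel.measurable_kernel_prodMk_left hs

lemma lintegral_bindK (π : Measure S) (K : Kernel S (S × ℝ)) [IsFiniteKernel K]
    {F : S × S × ℝ → ENNReal} (hF : Measurable F) :
    ∫⁻ q, F q ∂(π.bind fun y => (K y).map (fun p : S × ℝ => (y, p.1, p.2))) =
      ∫⁻ y, ∫⁻ p, F (y, p) ∂(K y) ∂π := by
  rw [Measure.lintegral_bind (measurable_bindker K).aemeasurable hF.aemeasurable]
  refine lintegral_congr fun y => ?_
  rw [lintegral_map hF measurable_prodMk_left]

lemma bindK_apply (π : Measure S) (K : Kernel S (S × ℝ)) [IsFiniteKernel K]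
    {s : Set (S × S × ℝ)} (hs : MeasurableSet s) :
    π.bind (fun y => (K y).map (fun p : S × ℝ => (y, p.1, p.2))) s
      = ∫⁻ y, K y (Prod.mk y ⁻¹' s) ∂π := by
  rw [Measure.bind_apply hs (measurable_bindker K).aemeasurable]
  exact lintegral_congr fun y => bindker_coe K y hs

lemma bindK_prod_ne_top (π : Measure S) (K : Kernel S (S × ℝ)) [IsFiniteKernel K]
    {X Y : Set S} (hX : MeasurableSet X) (hY : MeasurableSet Y) (hπX : π X ≠ ⊤) :
    π.bind (fun y => (K y).map (fun p : S × ℝ => (y, p.1, p.2)))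
      (X ×ˢ Y ×ˢ (univ : Set ℝ)) ≠ ⊤ := by
  rw [bindK_apply π K (hX.prod (hY.prod MeasurableSet.univ))]
  have hb : ∀ y, K y (Prod.mk y ⁻¹' (X ×ˢ Y ×ˢ (univ : Set ℝ)))
      ≤ X.indicator (fun _ => Kernel.bound K) y := by
    intro y
    by_cases hy : y ∈ X
    · rw [indicator_of_mem hy]
      exact Kernel.measure_le_bound K y _
    · have h0 : Prod.mk y ⁻¹' (X ×ˢ Y ×ˢ (univ : Set ℝ)) = ∅ := by
        ext p; simp [hy]
      rw [h0]
      simp [indicator_of_notMem hy]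
  refine ne_of_lt (lt_of_le_of_lt (lintegral_mono hb) ?_)
  rw [lintegral_indicator_const hX]
  exact ENNReal.mul_lt_top (Kernel.bound_lt_top K) (lt_top_iff_ne_top.2 hπX)

lemma measurable_G {f g : S × ℝ → ENNReal} (hf : Measurable f) (hg : Measurable g) :
    Measurable fun q : S × S × ℝ =>
      ∫⁻ z, f (q.1, z) * g (q.2.1, z + q.2.2) ∂(volume : Measure ℝ) := by
  exact Measurable.lintegral_prod_right'
    (f := fun r : (S × S × ℝ) × ℝ => f (r.1.1, r.2) * g (r.1.2.1, r.2 + r.1.2.2))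
    ((hf.comp ((measurable_fst.comp measurable_fst).prodMk measurable_snd)).mul
    (hg.comp ((measurable_fst.comp (measurable_snd.comp measurable_fst)).prodMk
      (measurable_snd.add (measurable_snd.comp (measurable_snd.comp measurable_fst))))))

lemma measurable_G' {f g : S × ℝ → ENNReal} (hf : Measurable f) (hg : Measurable g) :
    Measurable fun q : S × S × ℝ =>
      ∫⁻ z, f (q.2.1, z) * g (q.1, z + q.2.2) ∂(volume : Measure ℝ) := by
  exact Measurable.lintegral_prod_right'
    (f := fun r : (S × S × ℝ) × ℝ => f (r.1.2.1, r.2) * g (r.1.1, r.2 + r.1.2.2))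
    ((hf.comp ((measurable_fst.comp (measurable_snd.comp measurable_fst)).prodMk
      measurable_snd)).mul
    (hg.comp ((measurable_fst.comp measurable_fst).prodMk
      (measurable_snd.add (measurable_snd.comp (measurable_snd.comp measurable_fst))))))

lemma keyL (π : Measure S) [SigmaFinite π] (K : Kernel S (S × ℝ)) [IsFiniteKernel K]
    {f g : S × ℝ → ENNReal} (hf : Measurable f) (hg : Measurable g) :
    (∫⁻ p, f p * ∫⁻ q, g (q.1, p.2 + q.2) ∂(K p.1) ∂(π.prod (volume : Measure ℝ))) =
      ∫⁻ y, ∫⁻ p, (∫⁻ z, f (y, z) * g (p.1, z + p.2) ∂(volume : Measure ℝ)) ∂(K y) ∂π := by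
  have hψ : Measurable fun p : S × ℝ => ∫⁻ q, g (q.1, p.2 + q.2) ∂(K p.1) := by
    have h1 : Measurable fun pq : (S × ℝ) × S × ℝ => g (pq.2.1, pq.1.2 + pq.2.2) :=
      hg.comp ((measurable_fst.comp measurable_snd).prodMk
        ((measurable_snd.comp measurable_fst).add (measurable_snd.comp measurable_snd)))
    have h2 := Measurable.lintegral_kernel_prod_right'
      (κ := K.comap (Prod.fst : S × ℝ → S) measurable_fst) h1
    simpa [Kernel.comap_apply] using h2
  rw [lintegral_prod (fun p => f p * ∫⁻ q, g (q.1, p.2 + q.2) ∂(K p.1)) (hf.mul hψ).aemeasurable]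
  refine lintegral_congr fun y => ?_
  dsimp only
  have h3 : (∫⁻ z, f (y, z) * ∫⁻ q, g (q.1, z + q.2) ∂(K y) ∂(volume : Measure ℝ))
      = ∫⁻ z, ∫⁻ q, f (y, z) * g (q.1, z + q.2) ∂(K y) ∂(volume : Measure ℝ) :=
    lintegral_congr fun z => (lintegral_const_mul _ (hg.comp
      (measurable_fst.prodMk (measurable_snd.const_add z)))).symm
  rw [h3]
  exact lintegral_lintegral_swap
    ((hf.comp (measurable_const.prodMk measurable_fst)).mul
      (hg.comp ((measurable_fst.comp measurable_snd).prodMk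
        (measurable_fst.add (measurable_snd.comp measurable_snd))))).aemeasurable

lemma keyR (π : Measure S) [SigmaFinite π] (K : Kernel S (S × ℝ)) [IsFiniteKernel K]
    {f g : S × ℝ → ENNReal} (hf : Measurable f) (hg : Measurable g) :
    (∫⁻ p, g p * ∫⁻ q, f (q.1, p.2 - q.2) ∂(K p.1) ∂(π.prod (volume : Measure ℝ))) =
      ∫⁻ y, ∫⁻ p, (∫⁻ z, f (p.1, z) * g (y, z + p.2) ∂(volume : Measure ℝ)) ∂(K y) ∂π := by
  have hψ : Measurable fun p : S × ℝ => ∫⁻ q, f (q.1, p.2 - q.2) ∂(K p.1) := by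
    have h1 : Measurable fun pq : (S × ℝ) × S × ℝ => f (pq.2.1, pq.1.2 - pq.2.2) :=
      hf.comp ((measurable_fst.comp measurable_snd).prodMk
        ((measurable_snd.comp measurable_fst).sub (measurable_snd.comp measurable_snd)))
    have h2 := Measurable.lintegral_kernel_prod_right'
      (κ := K.comap (Prod.fst : S × ℝ → S) measurable_fst) h1
    simpa [Kernel.comap_apply] using h2
  rw [lintegral_prod (fun p => g p * ∫⁻ q, f (q.1, p.2 - q.2) ∂(K p.1)) (hg.mul hψ).aemeasurable]
  refine lintegral_congr fun y => ?_
  dsimp only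
  have h3 : (∫⁻ z, g (y, z) * ∫⁻ q, f (q.1, z - q.2) ∂(K y) ∂(volume : Measure ℝ))
      = ∫⁻ z, ∫⁻ q, g (y, z) * f (q.1, z - q.2) ∂(K y) ∂(volume : Measure ℝ) :=
    lintegral_congr fun z => (lintegral_const_mul _ (hf.comp
      (measurable_fst.prodMk (measurable_const.sub measurable_snd)))).symm
  rw [h3]
  have h4 : (∫⁻ z, ∫⁻ q, g (y, z) * f (q.1, z - q.2) ∂(K y) ∂(volume : Measure ℝ))
      = ∫⁻ q, ∫⁻ z, g (y, z) * f (q.1, z - q.2) ∂(volume : Measure ℝ) ∂(K y) :=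
    lintegral_lintegral_swap
      ((hg.comp (measurable_const.prodMk measurable_fst)).mul
        (hf.comp ((measurable_fst.comp measurable_snd).prodMk
          (measurable_fst.sub (measurable_snd.comp measurable_snd))))).aemeasurable
  rw [h4]
  refine lintegral_congr fun q => ?_
  have h5 := lintegral_add_right_eq_self (μ := (volume : Measure ℝ))
    (fun z => g (y, z) * f (q.1, z - q.2)) q.2
  rw [← h5]
  refine lintegral_congr fun z => ?_
  simp [add_sub_cancel_right, mul_comm]

end MapDualityAux

open MapDualityAux

/-- Weak duality of the semigroups `P_t f(y,z) = ∫ f(y₁, z+u) K(y, d(y₁,u))` and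
`P̂_t f(y,z) = ∫ f(y₁, z-u) K(y, d(y₁,u))` with respect to `π(dy)dz` holds if and only if
the measure `K(y, dy₁ × dz) π(dy)` on `S × S × ℝ` is symmetric in `(y, y₁)`
(reversibility of the MAP). -/
theorem map_duality_iff_reversible {S : Type*} [MeasurableSpace S]
    (π : Measure S) [SigmaFinite π] (K : Kernel S (S × ℝ)) [IsFiniteKernel K] :
    (∀ f g : S × ℝ → ENNReal, Measurable f → Measurable g →
      (∫⁻ p, f p * ∫⁻ q, g (q.1, p.2 + q.2) ∂(K p.1) ∂(π.prod (volume : Measure ℝ))) =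
      (∫⁻ p, g p * ∫⁻ q, f (q.1, p.2 - q.2) ∂(K p.1) ∂(π.prod (volume : Measure ℝ)))) ↔
    (π.bind (fun y => (K y).map (fun p => (y, p.1, p.2)))).map
        (fun q : S × S × ℝ => (q.2.1, q.1, q.2.2)) =
      π.bind (fun y => (K y).map (fun p => (y, p.1, p.2))) := by
  classical
  set M : Measure (S × S × ℝ) :=
    π.bind (fun y => (K y).map (fun p : S × ℝ => (y, p.1, p.2))) with hMdef
  have hsw : Measurable fun q : S × S × ℝ => (q.2.1, q.1, q.2.2) :=
    (measurable_fst.comp measurable_snd).prodMk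
      (measurable_fst.prodMk (measurable_snd.comp measurable_snd))
  constructor
  · intro hdual
    -- reformulate duality as an identity of integrals against `M`
    have hd : ∀ f g : S × ℝ → ENNReal, Measurable f → Measurable g →
        (∫⁻ q : S × S × ℝ,
            (∫⁻ z, f (q.1, z) * g (q.2.1, z + q.2.2) ∂(volume : Measure ℝ)) ∂M) =
        ∫⁻ q : S × S × ℝ,
            (∫⁻ z, f (q.2.1, z) * g (q.1, z + q.2.2) ∂(volume : Measure ℝ)) ∂M := by
      intro f g hf hg
      have e1 := lintegral_bindK (F := fun q : S × S × ℝ =>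
        ∫⁻ z, f (q.1, z) * g (q.2.1, z + q.2.2) ∂(volume : Measure ℝ)) π K
        (measurable_G hf hg)
      have e2 := lintegral_bindK (F := fun q : S × S × ℝ =>
        ∫⁻ z, f (q.2.1, z) * g (q.1, z + q.2.2) ∂(volume : Measure ℝ)) π K
        (measurable_G' hf hg)
      rw [← hMdef] at e1 e2
      have h0 := hdual f g hf hg
      rw [keyL π K hf hg, keyR π K hf hg] at h0
      exact (e1.trans h0).trans e2.symm
    -- the section measures on `ℝ`
    set ν : Set S → Set S → Measure ℝ := fun X Y =>
      (M.restrict (X ×ˢ Y ×ˢ (univ : Set ℝ))).map (fun q : S × S × ℝ => q.2.2) with hνdef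
    have hπ32 : Measurable fun q : S × S × ℝ => q.2.2 := measurable_snd.comp measurable_snd
    have hν_lint : ∀ (X Y : Set S) {h : ℝ → ENNReal}, Measurable h →
        ∫⁻ u, h u ∂(ν X Y) = ∫⁻ q in X ×ˢ Y ×ˢ (univ : Set ℝ), h q.2.2 ∂M := by
      intro X Y h hh
      simp only [hνdef]
      exact lintegral_map hh hπ32
    have hν_apply : ∀ (X Y : Set S), MeasurableSet X → MeasurableSet Y →
        ∀ {C : Set ℝ}, MeasurableSet C → ν X Y C = M (X ×ˢ Y ×ˢ C) := by
      intro X Y hX hY C hC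
      simp only [hνdef]
      rw [Measure.map_apply hπ32 hC, Measure.restrict_apply (hπ32 hC)]
      congr 1
      ext q
      simp only [mem_inter_iff, mem_preimage, mem_prod, mem_univ, and_true]
      tauto
    have hν_fin : ∀ (X Y : Set S), MeasurableSet X → MeasurableSet Y → π X ≠ ⊤ →
        ν X Y (univ : Set ℝ) ≠ ⊤ := by
      intro X Y hX hY hπX
      rw [hν_apply X Y hX hY MeasurableSet.univ, hMdef]
      exact bindK_prod_ne_top π K hX hY hπX
    -- the core: equality of section measures for finite rectangles
    have core : ∀ (A B : Set S), MeasurableSet A → MeasurableSet B → π A ≠ ⊤ → π B ≠ ⊤ →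
        ν A B = ν B A := by
      intro A B hA hB hAfin hBfin
      have hσ : ((ν A B).prod (volume : Measure ℝ)).map shearT
          = ((ν B A).prod (volume : Measure ℝ)).map shearT := by
        refine Measure.ext_of_generateFrom_of_iUnion
          (image2 (· ×ˢ ·) {s : Set ℝ | MeasurableSet s} {t : Set ℝ | MeasurableSet t})
          (fun n => Icc (-(n : ℝ)) n ×ˢ (univ : Set ℝ)) generateFrom_prod.symm isPiSystem_prod
          ?_ ?_ ?_ ?_
        · -- the cover is all of `ℝ × ℝ`
          have hIccMono : Monotone fun n : ℕ => Icc (-(n : ℝ)) (n : ℝ) := fun m n hmn =>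
            Icc_subset_Icc (neg_le_neg (Nat.cast_le.2 hmn)) (Nat.cast_le.2 hmn)
          have hIccU : (⋃ n : ℕ, Icc (-(n : ℝ)) (n : ℝ)) = univ := by
            ext x
            simp only [mem_iUnion, mem_Icc, mem_univ, iff_true]
            obtain ⟨n, hn⟩ := exists_nat_ge |x|
            exact ⟨n, (abs_le.1 hn).1, (abs_le.1 hn).2⟩
          rw [Set.iUnion_prod_of_monotone hIccMono monotone_const, hIccU, Set.iUnion_const,
            Set.univ_prod_univ]
        · intro n
          exact ⟨_, (measurableSet_Icc : MeasurableSet (Icc (-(n : ℝ)) n)), _, (MeasurableSet.univ : MeasurableSet (univ : Set ℝ)), rfl⟩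
        · intro n
          rw [Measure.map_apply shearT.measurable (measurableSet_Icc.prod MeasurableSet.univ)]
          have hpre : shearT ⁻¹' (Icc (-(n : ℝ)) n ×ˢ (univ : Set ℝ))
              = (univ : Set ℝ) ×ˢ Icc (-(n : ℝ)) n := by
            ext p
            simp [shearT_apply]
          rw [hpre, Measure.prod_prod]
          exact ENNReal.mul_ne_top (hν_fin A B hA hB hAfin)
            (by simp [Real.volume_Icc])
        · rintro _ ⟨E, hE, F, hF, rfl⟩
          have hE' : MeasurableSet E := hE
          have hF' : MeasurableSet F := hF
          set h : ℝ → ENNReal :=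
            fun u => ∫⁻ z, E.indicator 1 z * F.indicator 1 (z + u) ∂(volume : Measure ℝ)
            with hhdef
          have hh : Measurable h := by
            simp only [hhdef]
            exact Measurable.lintegral_prod_right'
              (f := fun r : ℝ × ℝ => E.indicator 1 r.2 * F.indicator 1 (r.2 + r.1))
              (((measurable_one.indicator hE').comp measurable_snd).mul
              ((measurable_one.indicator hF').comp (measurable_snd.add measurable_fst)))
          have hrect : ∀ μ0 : Measure ℝ,
              (μ0.prod (volume : Measure ℝ)).map shearT (E ×ˢ F) = ∫⁻ u, h u ∂μ0 := by
            intro μ0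
            rw [Measure.map_apply shearT.measurable (hE'.prod hF'),
              Measure.prod_apply (shearT.measurable (hE'.prod hF'))]
            refine lintegral_congr fun u => ?_
            have hpre : Prod.mk u ⁻¹' (shearT ⁻¹' (E ×ˢ F))
                = E ∩ (fun z => z + u) ⁻¹' F := by
              ext z
              simp [shearT_apply]
            rw [hpre, ← lintegral_indicator_one (hE'.inter ((measurable_add_const u) hF'))]
            simp only [hhdef]
            refine lintegral_congr fun z => ?_
            by_cases hz : z ∈ E <;> by_cases hzu : z + u ∈ F <;>
              simp [Set.indicator_apply, hz, hzu]
          have hfInd : Measurable ((A ×ˢ E).indicator (1 : S × ℝ → ENNReal)) :=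
            measurable_one.indicator (hA.prod hE')
          have hgInd : Measurable ((B ×ˢ F).indicator (1 : S × ℝ → ENNReal)) :=
            measurable_one.indicator (hB.prod hF')
          have hdi := hd _ _ hfInd hgInd
          have hGpt : ∀ (a b : S) (u : ℝ),
              (∫⁻ z, (A ×ˢ E).indicator (1 : S × ℝ → ENNReal) (a, z) *
                  (B ×ˢ F).indicator (1 : S × ℝ → ENNReal) (b, z + u) ∂(volume : Measure ℝ))
                = (A.indicator 1 a * B.indicator 1 b) * h u := by
            intro a b u
            have hmul : Measurable fun z : ℝ =>
                E.indicator (1 : ℝ → ENNReal) z * F.indicator 1 (z + u) :=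
              (measurable_one.indicator hE').mul
                ((measurable_one.indicator hF').comp (measurable_add_const u))
            simp only [hhdef]
            rw [← lintegral_const_mul _ hmul]
            refine lintegral_congr fun z => ?_
            by_cases ha : a ∈ A <;> by_cases hbb : b ∈ B <;> by_cases hz : z ∈ E <;>
              by_cases hzu : z + u ∈ F <;>
              simp [Set.indicator_apply, Set.mem_prod, ha, hbb, hz, hzu]
          have hsec : ∀ (U V : Set S), MeasurableSet U → MeasurableSet V →
              (∫⁻ q : S × S × ℝ,
                  (U.indicator 1 q.1 * V.indicator 1 q.2.1) * h q.2.2 ∂M)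
                = ∫⁻ u, h u ∂(ν U V) := by
            intro U V hU hV
            rw [hν_lint U V hh, ← lintegral_indicator (hU.prod (hV.prod MeasurableSet.univ))]
            refine lintegral_congr fun q => ?_
            by_cases h1 : q.1 ∈ U <;> by_cases h2 : q.2.1 ∈ V <;>
              simp [Set.indicator_apply, Set.mem_prod, h1, h2]
          calc ((ν A B).prod (volume : Measure ℝ)).map shearT (E ×ˢ F)
              = ∫⁻ u, h u ∂(ν A B) := hrect _
            _ = ∫⁻ q : S × S × ℝ,
                  (A.indicator 1 q.1 * B.indicator 1 q.2.1) * h q.2.2 ∂M :=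
                (hsec A B hA hB).symm
            _ = ∫⁻ q : S × S × ℝ,
                  (∫⁻ z, (A ×ˢ E).indicator (1 : S × ℝ → ENNReal) (q.1, z) *
                    (B ×ˢ F).indicator (1 : S × ℝ → ENNReal) (q.2.1, z + q.2.2)
                    ∂(volume : Measure ℝ)) ∂M :=
                lintegral_congr fun q => (hGpt q.1 q.2.1 q.2.2).symm
            _ = ∫⁻ q : S × S × ℝ,
                  (∫⁻ z, (A ×ˢ E).indicator (1 : S × ℝ → ENNReal) (q.2.1, z) *
                    (B ×ˢ F).indicator (1 : S × ℝ → ENNReal) (q.1, z + q.2.2)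
                    ∂(volume : Measure ℝ)) ∂M := hdi
            _ = ∫⁻ q : S × S × ℝ,
                  (B.indicator 1 q.1 * A.indicator 1 q.2.1) * h q.2.2 ∂M :=
                lintegral_congr fun q => by rw [hGpt q.2.1 q.1 q.2.2]; ring
            _ = ∫⁻ u, h u ∂(ν B A) := hsec B A hB hA
            _ = ((ν B A).prod (volume : Measure ℝ)).map shearT (E ×ˢ F) := (hrect _).symm
      have hprodeq : (ν A B).prod (volume : Measure ℝ) = (ν B A).prod (volume : Measure ℝ) := by
        have h1 := congrArg (Measure.map (shearT.symm : ℝ × ℝ ≃ᵐ ℝ × ℝ)) hσ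
        simpa using h1
      ext C hC
      have h1 := congrArg (fun μ : Measure (ℝ × ℝ) => μ (C ×ˢ Icc (0 : ℝ) 1)) hprodeq
      simp only [Measure.prod_prod, Real.volume_Icc, sub_zero, ENNReal.ofReal_one,
        mul_one] at h1
      exact h1
    -- conclude by a π-system argument on `S × S × ℝ`
    refine Measure.ext_of_generateFrom_of_iUnion
      (image2 (· ×ˢ ·) {s : Set S | MeasurableSet s}
        (image2 (· ×ˢ ·) {s : Set S | MeasurableSet s} {t : Set ℝ | MeasurableSet t}))
      (fun n => spanningSets π n ×ˢ (spanningSets π n ×ˢ (univ : Set ℝ)))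
      ?_ ?_ ?_ ?_ ?_ ?_
    · exact (generateFrom_eq_prod MeasurableSpace.generateFrom_measurableSet generateFrom_prod
        isCountablySpanning_measurableSet
        (isCountablySpanning_measurableSet.prod isCountablySpanning_measurableSet)).symm
    · exact MeasurableSpace.isPiSystem_measurableSet.prod
        (MeasurableSpace.isPiSystem_measurableSet.prod MeasurableSpace.isPiSystem_measurableSet)
    · have h0 : (⋃ n, spanningSets π n) = univ := iUnion_spanningSets π
      rw [Set.iUnion_prod_of_monotone (monotone_spanningSets π)
          (fun m n hmn => Set.prod_mono (monotone_spanningSets π hmn) subset_rfl),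
        Set.iUnion_prod_of_monotone (monotone_spanningSets π) monotone_const, h0,
        Set.iUnion_const, Set.univ_prod_univ, Set.univ_prod_univ]
    · intro n
      exact ⟨_, measurableSet_spanningSets π n,
        _, ⟨_, measurableSet_spanningSets π n, _, (MeasurableSet.univ : MeasurableSet (univ : Set ℝ)), rfl⟩, rfl⟩
    · intro n
      rw [Measure.map_apply hsw ((measurableSet_spanningSets π n).prod
        ((measurableSet_spanningSets π n).prod MeasurableSet.univ))]
      have hpre : (fun q : S × S × ℝ => (q.2.1, q.1, q.2.2)) ⁻¹'
          (spanningSets π n ×ˢ (spanningSets π n ×ˢ (univ : Set ℝ)))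
          = spanningSets π n ×ˢ (spanningSets π n ×ˢ (univ : Set ℝ)) := by
        ext q
        simp only [mem_preimage, mem_prod, mem_univ, and_true]
        tauto
      rw [hpre, hMdef]
      exact bindK_prod_ne_top π K (measurableSet_spanningSets π n)
        (measurableSet_spanningSets π n) (measure_spanningSets_lt_top π n).ne
    · rintro _ ⟨A, hA, _, ⟨B, hB, C, hC, rfl⟩, rfl⟩
      dsimp only
      have hA' : MeasurableSet A := hA
      have hB' : MeasurableSet B := hB
      have hC' : MeasurableSet C := hC
      rw [Measure.map_apply hsw (hA'.prod (hB'.prod hC'))]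
      have hpre : (fun q : S × S × ℝ => (q.2.1, q.1, q.2.2)) ⁻¹' (A ×ˢ B ×ˢ C)
          = B ×ˢ A ×ˢ C := by
        ext q
        simp only [mem_preimage, mem_prod]
        tauto
      rw [hpre]
      -- goal : M (B ×ˢ A ×ˢ C) = M (A ×ˢ B ×ˢ C)
      have key : ∀ (X Y : Set S), MeasurableSet X → MeasurableSet Y → π X ≠ ⊤ → π Y ≠ ⊤ →
          M (Y ×ˢ X ×ˢ C) = M (X ×ˢ Y ×ˢ C) := by
        intro X Y hX hY hXf hYf
        rw [← hν_apply Y X hY hX hC', ← hν_apply X Y hX hY hC', core X Y hX hY hXf hYf]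
      have hAse : Monotone fun n => A ∩ spanningSets π n := fun m n hmn =>
        inter_subset_inter subset_rfl (monotone_spanningSets π hmn)
      have hBse : Monotone fun n => B ∩ spanningSets π n := fun m n hmn =>
        inter_subset_inter subset_rfl (monotone_spanningSets π hmn)
      have hAU : (⋃ n, A ∩ spanningSets π n) = A := by
        rw [← Set.inter_iUnion, iUnion_spanningSets, Set.inter_univ]
      have hBU : (⋃ n, B ∩ spanningSets π n) = B := by
        rw [← Set.inter_iUnion, iUnion_spanningSets, Set.inter_univ]
      have hU1 : (⋃ n, (B ∩ spanningSets π n) ×ˢ ((A ∩ spanningSets π n) ×ˢ C))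
          = B ×ˢ A ×ˢ C := by
        rw [Set.iUnion_prod_of_monotone hBse
            (fun m n hmn => Set.prod_mono (hAse hmn) subset_rfl),
          Set.iUnion_prod_of_monotone hAse monotone_const, Set.iUnion_const, hBU, hAU]
      have hU2 : (⋃ n, (A ∩ spanningSets π n) ×ˢ ((B ∩ spanningSets π n) ×ˢ C))
          = A ×ˢ B ×ˢ C := by
        rw [Set.iUnion_prod_of_monotone hAse
            (fun m n hmn => Set.prod_mono (hBse hmn) subset_rfl),
          Set.iUnion_prod_of_monotone hBse monotone_const, Set.iUnion_const, hAU, hBU]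
      have hmono1 : Monotone fun n => (B ∩ spanningSets π n) ×ˢ ((A ∩ spanningSets π n) ×ˢ C) :=
        fun m n hmn => Set.prod_mono (hBse hmn) (Set.prod_mono (hAse hmn) subset_rfl)
      have hmono2 : Monotone fun n => (A ∩ spanningSets π n) ×ˢ ((B ∩ spanningSets π n) ×ˢ C) :=
        fun m n hmn => Set.prod_mono (hAse hmn) (Set.prod_mono (hBse hmn) subset_rfl)
      rw [← hU1, ← hU2, hmono1.directed_le.measure_iUnion, hmono2.directed_le.measure_iUnion]
      refine iSup_congr fun n => ?_
      exact key (A ∩ spanningSets π n) (B ∩ spanningSets π n)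
        (hA'.inter (measurableSet_spanningSets π n)) (hB'.inter (measurableSet_spanningSets π n))
        ((measure_mono inter_subset_right).trans_lt (measure_spanningSets_lt_top π n)).ne
        ((measure_mono inter_subset_right).trans_lt (measure_spanningSets_lt_top π n)).ne
  · intro hrev f g hf hg
    rw [keyL π K hf hg, keyR π K hf hg]
    have e1 := lintegral_bindK (F := fun q : S × S × ℝ =>
      ∫⁻ z, f (q.1, z) * g (q.2.1, z + q.2.2) ∂(volume : Measure ℝ)) π K
      (measurable_G hf hg)
    have e2 := lintegral_bindK (F := fun q : S × S × ℝ =>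
      ∫⁻ z, f (q.2.1, z) * g (q.1, z + q.2.2) ∂(volume : Measure ℝ)) π K
      (measurable_G' hf hg)
    rw [← hMdef] at e1 e2
    have e3 : (∫⁻ q : S × S × ℝ,
        (∫⁻ z, f (q.1, z) * g (q.2.1, z + q.2.2) ∂(volume : Measure ℝ))
          ∂(M.map (fun q : S × S × ℝ => (q.2.1, q.1, q.2.2))))
        = ∫⁻ q : S × S × ℝ,
          (∫⁻ z, f (q.2.1, z) * g (q.1, z + q.2.2) ∂(volume : Measure ℝ)) ∂M :=
      lintegral_map (measurable_G hf hg) hsw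
    rw [hrev] at e3
    exact (e1.symm.trans e3).trans e2
end

section
/- Let P¹_t, P²_t, P³_t be sub-Markov kernels on an open set H ⊆ ℝ^d, and let h₁, h₂ : H → (0,∞) be continuous. Suppose: (a) ∫ (P¹_t f)(x) g(x) h₁(x) dx = ∫ f(x) (P²_t g)(x) h₁(x) dx for all nonnegative Borel f,g; (b) ∫ (P¹_t f)(x) g(x) h₂(x) dx = ∫ f(x) (P³_t g)(x) h₂(x) dx for all nonnegative Borel f,g; and (c) P²_t and P³_t map bounded continuous functions to continuous functions. Then with h = h₁/h₂, for all t ≥ 0, x ∈ H, and nonnegative Borel g: (P²_t g)(x) = (1/h(x)) · P³_t(h·g)(x). In particular h is excessive for P³_t, i.e. P³_t h ≤ h pointwise. -/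
open MeasureTheory ProbabilityTheory
open scoped ENNReal NNReal

/-- Lebesgue measure on a subset `H` of `ℝ^d`. -/
noncomputable def lebesgueOn {d : ℕ} (H : Set (EuclideanSpace ℝ (Fin d))) : Measure H :=
  (volume : Measure (EuclideanSpace ℝ (Fin d))).comap (Subtype.val : H → EuclideanSpace ℝ (Fin d))

section Aux

variable {d : ℕ} {H : Set (EuclideanSpace ℝ (Fin d))}

lemma lebesgueOn_apply (hH : MeasurableSet H) (s : Set H) :
    lebesgueOn H s = volume (Subtype.val '' s) :=
  (MeasurableEmbedding.subtype_coe hH).comap_apply volume s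

lemma lebesgueOn_sigmaFinite (hH : MeasurableSet H) : SigmaFinite (lebesgueOn H) := by
  refine ⟨⟨⟨fun n => Subtype.val ⁻¹' Metric.ball 0 n, fun _ => trivial, fun n => ?_, ?_⟩⟩⟩
  · rw [lebesgueOn_apply hH]
    refine lt_of_le_of_lt (measure_mono (Set.image_preimage_subset _ _))
      (measure_ball_lt_top (x := (0 : EuclideanSpace ℝ (Fin d))) (r := n))
  · rw [← Set.preimage_iUnion, Metric.iUnion_ball_nat, Set.preimage_univ]

lemma lebesgueOn_openPos (hH : IsOpen H) : (lebesgueOn H).IsOpenPosMeasure := by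
  refine ⟨fun U hU hne => ?_⟩
  rw [lebesgueOn_apply hH.measurableSet]
  exact ((hH.isOpenMap_subtype_val U hU).measure_pos volume (hne.image _)).ne'

end Aux

/-- If `P²` and `P³` are both weak duals of `P¹` with respect to the measures `h₁(x)dx`
and `h₂(x)dx` on an open set `H`, and `P²`, `P³` are Feller, then `P²` is the Doob
`h`-transform of `P³` with `h = h₁/h₂`; in particular `h` is excessive for `P³`. -/
theorem duality_gives_doob_h_transform {d : ℕ} (H : Set (EuclideanSpace ℝ (Fin d)))
    (hH : IsOpen H)
    (P₁ P₂ P₃ : ℝ → Kernel H H)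
    (hsub : ∀ t : ℝ, 0 ≤ t → ∀ x : H, (P₁ t x) Set.univ ≤ 1 ∧ (P₂ t x) Set.univ ≤ 1 ∧
      (P₃ t x) Set.univ ≤ 1)
    (h₁ h₂ : H → ℝ) (h₁cont : Continuous h₁) (h₂cont : Continuous h₂)
    (h₁pos : ∀ x, 0 < h₁ x) (h₂pos : ∀ x, 0 < h₂ x)
    (hdual₁ : ∀ t : ℝ, 0 ≤ t → ∀ f g : H → ENNReal, Measurable f → Measurable g →
      (∫⁻ x, (∫⁻ y, f y ∂(P₁ t x)) * g x * ENNReal.ofReal (h₁ x) ∂lebesgueOn H) =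
      ∫⁻ x, f x * (∫⁻ y, g y ∂(P₂ t x)) * ENNReal.ofReal (h₁ x) ∂lebesgueOn H)
    (hdual₂ : ∀ t : ℝ, 0 ≤ t → ∀ f g : H → ENNReal, Measurable f → Measurable g →
      (∫⁻ x, (∫⁻ y, f y ∂(P₁ t x)) * g x * ENNReal.ofReal (h₂ x) ∂lebesgueOn H) =
      ∫⁻ x, f x * (∫⁻ y, g y ∂(P₃ t x)) * ENNReal.ofReal (h₂ x) ∂lebesgueOn H)
    (hFeller₂ : ∀ t : ℝ, 0 ≤ t → ∀ φ : H → ℝ, Continuous φ → (∃ C, ∀ x, |φ x| ≤ C) →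
      Continuous (fun x => ∫ y, φ y ∂(P₂ t x)))
    (hFeller₃ : ∀ t : ℝ, 0 ≤ t → ∀ φ : H → ℝ, Continuous φ → (∃ C, ∀ x, |φ x| ≤ C) →
      Continuous (fun x => ∫ y, φ y ∂(P₃ t x))) :
    ∀ t : ℝ, 0 ≤ t → ∀ x : H,
      (∀ g : H → ENNReal, Measurable g →
        (∫⁻ y, g y ∂(P₂ t x)) =
          (ENNReal.ofReal (h₁ x / h₂ x))⁻¹ *
            ∫⁻ y, ENNReal.ofReal (h₁ y / h₂ y) * g y ∂(P₃ t x)) ∧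
      (∫⁻ y, ENNReal.ofReal (h₁ y / h₂ y) ∂(P₃ t x)) ≤ ENNReal.ofReal (h₁ x / h₂ x) := by
  intro t ht x
  classical
  haveI : SigmaFinite (lebesgueOn H) := lebesgueOn_sigmaFinite hH.measurableSet
  haveI : (lebesgueOn H).IsOpenPosMeasure := lebesgueOn_openPos hH
  set μ : Measure H := lebesgueOn H with hμdef
  set h : H → ℝ≥0∞ := fun y => ENNReal.ofReal (h₁ y / h₂ y) with hdef
  -- basic positivity / finiteness facts
  have c₁ne : ∀ y : H, ENNReal.ofReal (h₁ y) ≠ 0 := fun y => by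
    simp [ENNReal.ofReal_eq_zero, not_le, h₁pos y]
  have c₁top : ∀ y : H, ENNReal.ofReal (h₁ y) ≠ ∞ := fun _ => ENNReal.ofReal_ne_top
  have c₂ne : ∀ y : H, ENNReal.ofReal (h₂ y) ≠ 0 := fun y => by
    simp [ENNReal.ofReal_eq_zero, not_le, h₂pos y]
  have c₂top : ∀ y : H, ENNReal.ofReal (h₂ y) ≠ ∞ := fun _ => ENNReal.ofReal_ne_top
  have hrpos : ∀ y : H, 0 < h₁ y / h₂ y := fun y => div_pos (h₁pos y) (h₂pos y)
  have hne : ∀ y : H, h y ≠ 0 := fun y => by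
    simp [hdef, ENNReal.ofReal_eq_zero, not_le, hrpos y]
  have htop : ∀ y : H, h y ≠ ∞ := fun _ => ENNReal.ofReal_ne_top
  have hdiv : ∀ y : H, h y = ENNReal.ofReal (h₁ y) / ENNReal.ofReal (h₂ y) := fun y =>
    ENNReal.ofReal_div_of_pos (h₂pos y)
  have hinv : ∀ y : H, (h y)⁻¹ * ENNReal.ofReal (h₁ y) = ENNReal.ofReal (h₂ y) := by
    intro y
    rw [hdiv y, ENNReal.inv_div (Or.inr (c₁top y)) (Or.inr (c₁ne y))]
    exact ENNReal.div_mul_cancel (c₁ne y) (c₁top y)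
  have hrcont : Continuous fun y : H => h₁ y / h₂ y := h₁cont.div h₂cont fun y => (h₂pos y).ne'
  have hmeas : Measurable h := ENNReal.measurable_ofReal.comp hrcont.measurable
  have kermeas : ∀ (κ : Kernel H H) (g : H → ℝ≥0∞), Measurable g →
      Measurable fun z => ∫⁻ y, g y ∂κ z := fun κ g hg =>
    (Measure.measurable_lintegral hg).comp κ.measurable
  -- Step 1: the a.e. duality identity
  have claim : ∀ g : H → ℝ≥0∞, Measurable g →
      (fun z => (∫⁻ y, (h y)⁻¹ * g y ∂P₂ t z) * ENNReal.ofReal (h₁ z)) =ᵐ[μ]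
      (fun z => (∫⁻ y, g y ∂P₃ t z) * ENNReal.ofReal (h₂ z)) := by
    intro g hg
    have hg' : Measurable fun y => (h y)⁻¹ * g y := hmeas.inv.mul hg
    have key : ∀ f : H → ℝ≥0∞, Measurable f →
        ∫⁻ z, f z * ((∫⁻ y, (h y)⁻¹ * g y ∂P₂ t z) * ENNReal.ofReal (h₁ z)) ∂μ =
        ∫⁻ z, f z * ((∫⁻ y, g y ∂P₃ t z) * ENNReal.ofReal (h₂ z)) ∂μ := by
      intro f hf
      have e₁ := hdual₁ t ht f _ hf hg'
      have e₂ := hdual₂ t ht f g hf hg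
      have e₃ : ∀ z : H, (∫⁻ y, f y ∂P₁ t z) * ((h z)⁻¹ * g z) * ENNReal.ofReal (h₁ z)
          = (∫⁻ y, f y ∂P₁ t z) * g z * ENNReal.ofReal (h₂ z) := by
        intro z
        calc (∫⁻ y, f y ∂P₁ t z) * ((h z)⁻¹ * g z) * ENNReal.ofReal (h₁ z)
            = (∫⁻ y, f y ∂P₁ t z) * g z * ((h z)⁻¹ * ENNReal.ofReal (h₁ z)) := by ring
          _ = _ := by rw [hinv z]
      calc ∫⁻ z, f z * ((∫⁻ y, (h y)⁻¹ * g y ∂P₂ t z) * ENNReal.ofReal (h₁ z)) ∂μ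
          = ∫⁻ z, f z * (∫⁻ y, (h y)⁻¹ * g y ∂P₂ t z) * ENNReal.ofReal (h₁ z) ∂μ := by
            simp_rw [mul_assoc]
        _ = ∫⁻ z, (∫⁻ y, f y ∂P₁ t z) * ((h z)⁻¹ * g z) * ENNReal.ofReal (h₁ z) ∂μ := e₁.symm
        _ = ∫⁻ z, (∫⁻ y, f y ∂P₁ t z) * g z * ENNReal.ofReal (h₂ z) ∂μ := lintegral_congr e₃
        _ = ∫⁻ z, f z * (∫⁻ y, g y ∂P₃ t z) * ENNReal.ofReal (h₂ z) ∂μ := e₂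
        _ = _ := by simp_rw [mul_assoc]
    have indmul : ∀ (s : Set H), MeasurableSet s → ∀ F : H → ℝ≥0∞,
        ∫⁻ z, (s.indicator (fun _ => (1 : ℝ≥0∞)) z) * F z ∂μ = ∫⁻ z in s, F z ∂μ := by
      intro s hs F
      rw [← lintegral_indicator hs]
      refine lintegral_congr fun z => ?_
      by_cases hz : z ∈ s <;> simp [hz]
    refine ae_eq_of_forall_setLIntegral_eq_of_sigmaFinite
      ((kermeas _ _ hg').mul (ENNReal.measurable_ofReal.comp h₁cont.measurable))
      ((kermeas _ _ hg).mul (ENNReal.measurable_ofReal.comp h₂cont.measurable))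
      (fun s hs _ => ?_)
    have := key (s.indicator fun _ => 1) (measurable_one.indicator hs)
    rw [indmul s hs, indmul s hs] at this
    exact this
  -- helper : lintegral of a bounded nonneg continuous function equals `ofReal` of its integral
  have contL : ∀ (κ : Kernel H H), (∀ z, κ z Set.univ ≤ 1) →
      ∀ ψ : H → ℝ, Continuous ψ → (∀ y, 0 ≤ ψ y) → (∃ C', ∀ y, |ψ y| ≤ C') →
      ∀ z, ∫⁻ y, ENNReal.ofReal (ψ y) ∂κ z = ENNReal.ofReal (∫ y, ψ y ∂κ z) := by
    rintro κ hκ ψ ψc ψnn ⟨C', hC'⟩ z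
    haveI : IsFiniteMeasure (κ z) := ⟨lt_of_le_of_lt (hκ z) ENNReal.one_lt_top⟩
    have hint : Integrable ψ (κ z) :=
      ⟨ψc.aestronglyMeasurable,
        HasFiniteIntegral.of_bounded (C := C') (ae_of_all _ fun y => by simpa using hC' y)⟩
    exact (MeasureTheory.ofReal_integral_eq_lintegral_ofReal hint (ae_of_all _ ψnn)).symm
  -- Step 2: the everywhere duality identity for bounded continuous nonneg test functions
  have star : ∀ φ : H → ℝ, Continuous φ → (∀ y, 0 ≤ φ y) → (∃ C, ∀ y, |φ y| ≤ C) →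
      ∀ z : H, (∫⁻ y, ENNReal.ofReal (φ y) ∂P₂ t z) * ENNReal.ofReal (h₁ z) =
        (∫⁻ y, h y * ENNReal.ofReal (φ y) ∂P₃ t z) * ENNReal.ofReal (h₂ z) := by
    rintro φ φcont φnn ⟨C, hC⟩
    have hC0 : 0 ≤ C := le_trans (abs_nonneg _) (hC x)
    set ρ : ℕ → H → ℝ := fun n y => min (h₁ y / h₂ y) n * φ y with hρ
    set σ : ℕ → H → ℝ := fun n y => min 1 (n * (h₂ y / h₁ y)) * φ y with hσ
    have ρcont : ∀ n, Continuous (ρ n) := fun n => (hrcont.min continuous_const).mul φcont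
    have σcont : ∀ n, Continuous (σ n) := fun n =>
      (continuous_const.min
        (continuous_const.mul (h₂cont.div h₁cont fun y => (h₁pos y).ne'))).mul φcont
    have ρmin_nn : ∀ (n : ℕ) (y : H), 0 ≤ min (h₁ y / h₂ y) (n : ℝ) := fun n y =>
      le_min (hrpos y).le n.cast_nonneg
    have σmin_nn : ∀ (n : ℕ) (y : H), 0 ≤ min 1 ((n : ℝ) * (h₂ y / h₁ y)) := fun n y =>
      le_min zero_le_one (mul_nonneg n.cast_nonneg (div_nonneg (h₂pos y).le (h₁pos y).le))
    have ρnn : ∀ n y, 0 ≤ ρ n y := fun n y => mul_nonneg (ρmin_nn n y) (φnn y)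
    have σnn : ∀ n y, 0 ≤ σ n y := fun n y => mul_nonneg (σmin_nn n y) (φnn y)
    have φleC : ∀ y, φ y ≤ C := fun y => (le_abs_self _).trans (hC y)
    have ρbdd : ∀ n : ℕ, ∃ C', ∀ y, |ρ n y| ≤ C' := fun n =>
      ⟨n * C, fun y => by
        rw [abs_of_nonneg (ρnn n y)]
        calc ρ n y ≤ (n : ℝ) * φ y :=
              mul_le_mul_of_nonneg_right (min_le_right _ _) (φnn y)
          _ ≤ (n : ℝ) * C := mul_le_mul_of_nonneg_left (φleC y) n.cast_nonneg⟩
    have σbdd : ∀ n : ℕ, ∃ C', ∀ y, |σ n y| ≤ C' := fun n =>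
      ⟨C, fun y => by
        rw [abs_of_nonneg (σnn n y)]
        calc σ n y ≤ 1 * φ y := mul_le_mul_of_nonneg_right (min_le_left _ _) (φnn y)
          _ = φ y := one_mul _
          _ ≤ C := φleC y⟩
    -- pointwise ENNReal versions
    have ofρ : ∀ (n : ℕ) (y : H),
        ENNReal.ofReal (ρ n y) = min (h y) n * ENNReal.ofReal (φ y) := by
      intro n y
      rw [hρ]
      rw [ENNReal.ofReal_mul (ρmin_nn n y)]
      congr 1
      rw [Monotone.map_min (fun a b hab => ENNReal.ofReal_le_ofReal hab),
        ENNReal.ofReal_natCast]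
    have ofσ : ∀ (n : ℕ) (y : H),
        ENNReal.ofReal (σ n y) = (h y)⁻¹ * min (h y) n * ENNReal.ofReal (φ y) := by
      intro n y
      have e1 : ENNReal.ofReal (h₂ y / h₁ y) = (h y)⁻¹ := by
        rw [show h₂ y / h₁ y = (h₁ y / h₂ y)⁻¹ by rw [inv_div],
          ENNReal.ofReal_inv_of_pos (hrpos y)]
      have mono : Monotone fun z : ℝ≥0∞ => (h y)⁻¹ * z := fun a b hab => mul_le_mul_right hab _
      have e2 : (h y)⁻¹ * min (h y) (n : ℝ≥0∞) = min 1 ((n : ℝ≥0∞) * (h y)⁻¹) := by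
        rw [mono.map_min, ENNReal.inv_mul_cancel (hne y) (htop y), mul_comm]
      rw [hσ]
      rw [ENNReal.ofReal_mul (σmin_nn n y)]
      congr 1
      rw [Monotone.map_min (fun a b hab => ENNReal.ofReal_le_ofReal hab),
        ENNReal.ofReal_one, ENNReal.ofReal_mul n.cast_nonneg, e1, ENNReal.ofReal_natCast, e2]
    -- the pointwise (in z) identity at level n
    have stepn : ∀ (n : ℕ) (z : H),
        (∫⁻ y, ENNReal.ofReal (σ n y) ∂P₂ t z) * ENNReal.ofReal (h₁ z) =
        (∫⁻ y, ENNReal.ofReal (ρ n y) ∂P₃ t z) * ENNReal.ofReal (h₂ z) := by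
      intro n
      have Leq : ∀ z : H, (∫⁻ y, ENNReal.ofReal (σ n y) ∂P₂ t z) * ENNReal.ofReal (h₁ z)
          = ENNReal.ofReal ((∫ y, σ n y ∂P₂ t z) * h₁ z) := fun z => by
        rw [contL (P₂ t) (fun z => (hsub t ht z).2.1) _ (σcont n) (σnn n) (σbdd n) z,
          ← ENNReal.ofReal_mul (integral_nonneg (σnn n))]
      have Req : ∀ z : H, (∫⁻ y, ENNReal.ofReal (ρ n y) ∂P₃ t z) * ENNReal.ofReal (h₂ z)
          = ENNReal.ofReal ((∫ y, ρ n y ∂P₃ t z) * h₂ z) := fun z => by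
        rw [contL (P₃ t) (fun z => (hsub t ht z).2.2) _ (ρcont n) (ρnn n) (ρbdd n) z,
          ← ENNReal.ofReal_mul (integral_nonneg (ρnn n))]
      have conv : ∀ y : H, (h y)⁻¹ * ENNReal.ofReal (ρ n y) = ENNReal.ofReal (σ n y) :=
        fun y => by rw [ofρ n y, ofσ n y, ← mul_assoc]
      have hae := claim (fun y => ENNReal.ofReal (ρ n y)) (ρcont n).measurable.ennreal_ofReal
      have hae2 : (fun z => (∫ y, σ n y ∂P₂ t z) * h₁ z)
          =ᵐ[μ] (fun z => (∫ y, ρ n y ∂P₃ t z) * h₂ z) := by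
        filter_upwards [hae] with z hz
        have hz' : (∫⁻ y, ENNReal.ofReal (σ n y) ∂P₂ t z) * ENNReal.ofReal (h₁ z)
            = (∫⁻ y, ENNReal.ofReal (ρ n y) ∂P₃ t z) * ENNReal.ofReal (h₂ z) := by
          rw [← hz]; congr 1; exact lintegral_congr fun y => (conv y).symm
        rw [Leq z, Req z] at hz'
        exact (ENNReal.ofReal_eq_ofReal_iff
          (mul_nonneg (integral_nonneg (σnn n)) (h₁pos z).le)
          (mul_nonneg (integral_nonneg (ρnn n)) (h₂pos z).le)).mp hz'
      have Lc : Continuous fun z : H => (∫ y, σ n y ∂P₂ t z) * h₁ z :=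
        (hFeller₂ t ht _ (σcont n) (σbdd n)).mul h₁cont
      have Rc : Continuous fun z : H => (∫ y, ρ n y ∂P₃ t z) * h₂ z :=
        (hFeller₃ t ht _ (ρcont n) (ρbdd n)).mul h₂cont
      have heq := (Lc.ae_eq_iff_eq μ Rc).mp hae2
      intro z
      rw [Leq z, Req z, congrFun heq z]
    -- pass to the supremum over n
    have supmin : ∀ y : H, ⨆ n : ℕ, min (h y) (n : ℝ≥0∞) = h y := by
      intro y
      refine le_antisymm (iSup_le fun n => min_le_left _ _) ?_
      obtain ⟨n, hn⟩ := ENNReal.exists_nat_gt (htop y)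
      exact le_iSup_of_le n (le_of_eq (min_eq_left hn.le).symm)
    have supρ : ∀ y : H, (⨆ n : ℕ, ENNReal.ofReal (ρ n y)) = h y * ENNReal.ofReal (φ y) := by
      intro y
      simp_rw [ofρ]
      rw [← ENNReal.iSup_mul, supmin y]
    have supσ : ∀ y : H, (⨆ n : ℕ, ENNReal.ofReal (σ n y)) = ENNReal.ofReal (φ y) := by
      intro y
      simp_rw [ofσ]
      rw [← ENNReal.iSup_mul, ← ENNReal.mul_iSup, supmin y,
        ENNReal.inv_mul_cancel (hne y) (htop y), one_mul]
    have monomin : ∀ y : H, Monotone fun n : ℕ => min (h y) (n : ℝ≥0∞) := fun y m n hmn =>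
      min_le_min le_rfl (by exact_mod_cast hmn)
    have monoρ : Monotone fun (n : ℕ) (y : H) => ENNReal.ofReal (ρ n y) := by
      intro m n hmn y
      simp only [ofρ]
      exact mul_le_mul_left (monomin y hmn) _
    have monoσ : Monotone fun (n : ℕ) (y : H) => ENNReal.ofReal (σ n y) := by
      intro m n hmn y
      simp only [ofσ]
      exact mul_le_mul_left (mul_le_mul_right (monomin y hmn) _) _
    intro z
    calc (∫⁻ y, ENNReal.ofReal (φ y) ∂P₂ t z) * ENNReal.ofReal (h₁ z)
        = (∫⁻ y, ⨆ n : ℕ, ENNReal.ofReal (σ n y) ∂P₂ t z) * ENNReal.ofReal (h₁ z) := by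
          congr 1; exact lintegral_congr fun y => (supσ y).symm
      _ = (⨆ n : ℕ, ∫⁻ y, ENNReal.ofReal (σ n y) ∂P₂ t z) * ENNReal.ofReal (h₁ z) := by
          rw [lintegral_iSup (fun n => (σcont n).measurable.ennreal_ofReal) monoσ]
      _ = ⨆ n : ℕ, (∫⁻ y, ENNReal.ofReal (σ n y) ∂P₂ t z) * ENNReal.ofReal (h₁ z) :=
          ENNReal.iSup_mul _ _
      _ = ⨆ n : ℕ, (∫⁻ y, ENNReal.ofReal (ρ n y) ∂P₃ t z) * ENNReal.ofReal (h₂ z) :=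
          iSup_congr fun n => stepn n z
      _ = (⨆ n : ℕ, ∫⁻ y, ENNReal.ofReal (ρ n y) ∂P₃ t z) * ENNReal.ofReal (h₂ z) :=
          (ENNReal.iSup_mul _ _).symm
      _ = (∫⁻ y, ⨆ n : ℕ, ENNReal.ofReal (ρ n y) ∂P₃ t z) * ENNReal.ofReal (h₂ z) := by
          rw [lintegral_iSup (fun n => (ρcont n).measurable.ennreal_ofReal) monoρ]
      _ = (∫⁻ y, h y * ENNReal.ofReal (φ y) ∂P₃ t z) * ENNReal.ofReal (h₂ z) := by
          congr 1; exact lintegral_congr fun y => supρ y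
  -- Step 3: identify the measures at the fixed point x
  haveI : IsFiniteMeasure (P₂ t x) := ⟨lt_of_le_of_lt (hsub t ht x).2.1 ENNReal.one_lt_top⟩
  haveI : IsFiniteMeasure (P₃ t x) := ⟨lt_of_le_of_lt (hsub t ht x).2.2 ENNReal.one_lt_top⟩
  set μ' : Measure H := ENNReal.ofReal (h₁ x) • P₂ t x with hμ'
  set ν' : Measure H := ENNReal.ofReal (h₂ x) • (P₃ t x).withDensity h with hν'
  haveI : IsFiniteMeasure μ' := ⟨by
    rw [hμ', Measure.smul_apply, smul_eq_mul]
    exact ENNReal.mul_lt_top ENNReal.ofReal_lt_top (measure_lt_top _ _)⟩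
  have hext : μ' = ν' := by
    refine ext_of_forall_lintegral_eq_of_IsFiniteMeasure fun f => ?_
    have φcont : Continuous fun y : H => ((f y : ℝ)) := NNReal.continuous_coe.comp f.continuous
    have φnn : ∀ y : H, (0 : ℝ) ≤ (f y : ℝ) := fun y => (f y).coe_nonneg
    have φbdd : ∃ C, ∀ y : H, |((f y : ℝ))| ≤ C := by
      obtain ⟨C, hC⟩ := f.bounded
      refine ⟨C + (f x : ℝ), fun y => ?_⟩
      rw [abs_of_nonneg (φnn y)]
      calc ((f y : ℝ)) ≤ |((f y : ℝ)) - (f x : ℝ)| + (f x : ℝ) := by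
            have := abs_sub_abs_le_abs_sub ((f y : ℝ)) ((f x : ℝ))
            rw [abs_of_nonneg (φnn y), abs_of_nonneg (φnn x)] at this
            linarith
        _ ≤ C + (f x : ℝ) := by
            have := hC y x
            rw [NNReal.dist_eq] at this
            linarith
    have hstar := star _ φcont φnn φbdd x
    simp only [ENNReal.ofReal_coe_nnreal] at hstar
    have fmeas : Measurable fun y : H => (f y : ℝ≥0∞) :=
      measurable_coe_nnreal_ennreal.comp f.continuous.measurable
    rw [hμ', hν', lintegral_smul_measure, lintegral_smul_measure,
      lintegral_withDensity_eq_lintegral_mul _ hmeas fmeas]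
    simp only [Pi.mul_apply, smul_eq_mul]
    rw [mul_comm (ENNReal.ofReal (h₁ x)) _, mul_comm (ENNReal.ofReal (h₂ x)) _]
    exact hstar
  have main : ∀ g : H → ENNReal, Measurable g →
      (∫⁻ y, g y ∂P₂ t x) =
        (ENNReal.ofReal (h₁ x / h₂ x))⁻¹ *
          ∫⁻ y, ENNReal.ofReal (h₁ y / h₂ y) * g y ∂P₃ t x := by
    intro g hg
    have e : ENNReal.ofReal (h₁ x) * ∫⁻ y, g y ∂P₂ t x
        = ENNReal.ofReal (h₂ x) * ∫⁻ y, h y * g y ∂P₃ t x := by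
      have l1 : ∫⁻ y, g y ∂μ' = ENNReal.ofReal (h₁ x) * ∫⁻ y, g y ∂P₂ t x := by
        rw [hμ', lintegral_smul_measure, smul_eq_mul]
      have l2 : ∫⁻ y, g y ∂ν' = ENNReal.ofReal (h₂ x) * ∫⁻ y, h y * g y ∂P₃ t x := by
        rw [hν', lintegral_smul_measure, lintegral_withDensity_eq_lintegral_mul _ hmeas hg]
        simp only [Pi.mul_apply, smul_eq_mul]
      rw [← l1, ← l2, hext]
    have : ∫⁻ y, ENNReal.ofReal (h₁ y / h₂ y) * g y ∂P₃ t x = ∫⁻ y, h y * g y ∂P₃ t x := by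
      simp only [hdef]
    rw [this]
    calc ∫⁻ y, g y ∂P₂ t x
        = (ENNReal.ofReal (h₁ x))⁻¹ * (ENNReal.ofReal (h₁ x) * ∫⁻ y, g y ∂P₂ t x) := by
          rw [← mul_assoc, ENNReal.inv_mul_cancel (c₁ne x) (c₁top x), one_mul]
      _ = (ENNReal.ofReal (h₁ x))⁻¹ * (ENNReal.ofReal (h₂ x) * ∫⁻ y, h y * g y ∂P₃ t x) := by
          rw [e]
      _ = (ENNReal.ofReal (h₁ x / h₂ x))⁻¹ * ∫⁻ y, h y * g y ∂P₃ t x := by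
          rw [ENNReal.ofReal_div_of_pos (h₂pos x),
            ENNReal.inv_div (Or.inr (c₁top x)) (Or.inr (c₁ne x)), div_eq_mul_inv,
            ← mul_assoc, mul_comm (ENNReal.ofReal (h₁ x))⁻¹ (ENNReal.ofReal (h₂ x))]
  refine ⟨main, ?_⟩
  have h1 := main (fun _ => 1) measurable_const
  rw [lintegral_one] at h1
  have hle : (ENNReal.ofReal (h₁ x / h₂ x))⁻¹ *
      (∫⁻ y, ENNReal.ofReal (h₁ y / h₂ y) ∂P₃ t x) ≤ 1 := by
    have : (∫⁻ y, ENNReal.ofReal (h₁ y / h₂ y) ∂P₃ t x)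
        = ∫⁻ y, ENNReal.ofReal (h₁ y / h₂ y) * (fun _ : H => (1 : ℝ≥0∞)) y ∂P₃ t x := by
      simp
    rw [this, ← h1]
    exact (hsub t ht x).2.1
  have hcne : ENNReal.ofReal (h₁ x / h₂ x) ≠ 0 := by
    simp [ENNReal.ofReal_eq_zero, not_le, hrpos x]
  have hctop : ENNReal.ofReal (h₁ x / h₂ x) ≠ ∞ := ENNReal.ofReal_ne_top
  calc ∫⁻ y, ENNReal.ofReal (h₁ y / h₂ y) ∂P₃ t x
      = ENNReal.ofReal (h₁ x / h₂ x) *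
        ((ENNReal.ofReal (h₁ x / h₂ x))⁻¹ * ∫⁻ y, ENNReal.ofReal (h₁ y / h₂ y) ∂P₃ t x) := by
        rw [← mul_assoc, ENNReal.mul_inv_cancel hcne hctop, one_mul]
    _ ≤ ENNReal.ofReal (h₁ x / h₂ x) * 1 := mul_le_mul_right hle _
    _ = ENNReal.ofReal (h₁ x / h₂ x) := mul_one _
end
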